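/- Let V ⊆ ℝ^n be a regular space, P, Q ∈ V r-paths with associated paths P∧Q, P∨Q. If (P∧Q)_j · (P∨Q)_j ≠ 0 for some index j, then (P∧Q)_j = (P∨Q)_j = P_j = Q_j. -/
import Mathlib


open Finset

variable {n : ℕ}

/-- The support of a vector. -/
def supp (x : Fin n → ℝ) : Set (Fin n) := {j | x j ≠ 0}

/-- A nonzero vector of `V` is elementary if no nonzero vector of `V` has support
properly contained in its support. -/
def IsElementary (V : Submodule ℝ (Fin n → ℝ)) (x : Fin n → ℝ) : Prop :=
  x ∈ V ∧ x ≠ 0 ∧ ∀ y ∈ V, y ≠ 0 → ¬ (supp y ⊂ supp x)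

/-- A primitive vector: elementary with entries in `{-1, 0, 1}`. -/
def IsPrimitive (V : Submodule ℝ (Fin n → ℝ)) (x : Fin n → ℝ) : Prop :=
  IsElementary V x ∧ ∀ j, x j ∈ ({-1, 0, 1} : Set ℝ)

/-- `y` conforms to `x`. -/
def Conforms (y x : Fin n → ℝ) : Prop := ∀ j, y j ≠ 0 → y j * x j > 0

/-- A regular space: the kernel of a totally unimodular matrix. -/
def IsRegularSpace (V : Submodule ℝ (Fin n → ℝ)) : Prop :=
  ∃ (m : ℕ) (A : Matrix (Fin m) (Fin n) ℝ),
    A.IsTotallyUnimodular ∧ V = LinearMap.ker A.mulVecLin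

/-- An `r`-path: a primitive vector with value `+1` at `r`. -/
def IsRPath (V : Submodule ℝ (Fin n → ℝ)) (r : Fin n) (P : Fin n → ℝ) : Prop :=
  IsPrimitive V P ∧ P r = 1

/-- Feasibility with respect to capacity `c` (no constraint at `r`). -/
def Feasible (c : Fin n → ℝ) (r : Fin n) (f : Fin n → ℝ) : Prop :=
  ∀ j, j ≠ r → 0 ≤ f j ∧ f j ≤ c j

/-- An `r`-path `P` is augmenting for the flow `f`. -/
def Augmenting (V : Submodule ℝ (Fin n → ℝ)) (c : Fin n → ℝ) (r : Fin n)
    (f P : Fin n → ℝ) : Prop :=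
  IsRPath V r P ∧ ∃ ε : ℝ, 0 < ε ∧ Feasible c r (f + ε • P)

/-- The 1-norm. -/
def onorm (x : Fin n → ℝ) : ℝ := ∑ j, |x j|

/-- A shortest augmenting `r`-path. -/
def ShortestAug (V : Submodule ℝ (Fin n → ℝ)) (c : Fin n → ℝ) (r : Fin n)
    (f P : Fin n → ℝ) : Prop :=
  Augmenting V c r f P ∧ ∀ Q, Augmenting V c r f Q → onorm P ≤ onorm Q

/-- `g` is obtained from `f` by maximal augmentation along `P`. -/
def MaxAug (c : Fin n → ℝ) (r : Fin n) (f P g : Fin n → ℝ) : Prop :=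
  ∃ ε : ℝ, 0 < ε ∧ g = f + ε • P ∧ Feasible c r g ∧
    ∀ ε' : ℝ, ε < ε' → ¬ Feasible c r (f + ε' • P)

/-- A conformal primitive decomposition of `P + Q` in which `M` and `J` are the two
`r`-path summands (`M` playing the role of `P ∧ Q` and `J` of `P ∨ Q`). -/
def MeetJoinDecomp (V : Submodule ℝ (Fin n → ℝ)) (r : Fin n)
    (P Q M J : Fin n → ℝ) : Prop :=
  ∃ (k : ℕ) (p : Fin k → Fin n → ℝ) (a b : Fin k),
    (∀ i, IsPrimitive V (p i)) ∧ (∀ i, Conforms (p i) (P + Q)) ∧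
    (∑ i, p i) = P + Q ∧ a ≠ b ∧ p a = M ∧ p b = J ∧
    p a r = 1 ∧ p b r = 1 ∧ ∀ i, p i r = 1 → i = a ∨ i = b

theorem stmt9 (V : Submodule ℝ (Fin n → ℝ)) (hV : IsRegularSpace V)
    (r : Fin n) (P Q M J : Fin n → ℝ) (hP : IsRPath V r P) (hQ : IsRPath V r Q)
    (hMJ : MeetJoinDecomp V r P Q M J) (j : Fin n) (hj : M j * J j ≠ 0) :
    M j = J j ∧ J j = P j ∧ P j = Q j := by
  obtain ⟨k, p, a, b, hprim, hconf, hsum, hab, hpa, hpb, har, hbr, -⟩ := hMJ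
  subst hpa hpb
  have hM0 : p a j ≠ 0 := fun h => hj (by simp [h])
  have hJ0 : p b j ≠ 0 := fun h => hj (by simp [h])
  have hMs : p a j * (P j + Q j) > 0 := by
    have := hconf a j hM0; simpa [Pi.add_apply] using this
  have hJs : p b j * (P j + Q j) > 0 := by
    have := hconf b j hJ0; simpa [Pi.add_apply] using this
  have hPQ : P j + Q j = ∑ i, p i j := by
    have := congrFun hsum j
    simp only [Finset.sum_apply, Pi.add_apply] at this
    linarith [this]
  have hmemP : P j = -1 ∨ P j = 0 ∨ P j = 1 := by
    have := hP.1.2 j; simpa using this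
  have hmemQ : Q j = -1 ∨ Q j = 0 ∨ Q j = 1 := by
    have := hQ.1.2 j; simpa using this
  have hmema : p a j = -1 ∨ p a j = 0 ∨ p a j = 1 := by
    have := (hprim a).2 j; simpa using this
  have hmemb : p b j = -1 ∨ p b j = 0 ∨ p b j = 1 := by
    have := (hprim b).2 j; simpa using this
  rcases lt_trichotomy 0 (P j + Q j) with hpos | hzero | hneg
  · -- positive case
    have ha1 : p a j = 1 := by rcases hmema with h|h|h <;> [nlinarith; nlinarith; exact h]
    have hb1 : p b j = 1 := by rcases hmemb with h|h|h <;> [nlinarith; nlinarith; exact h]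
    have hnn : ∀ i, 0 ≤ p i j := by
      intro i
      by_cases h : p i j = 0
      · simp [h]
      · have hc := hconf i j h
        simp only [Pi.add_apply] at hc
        rcases (by simpa using (hprim i).2 j : p i j = -1 ∨ p i j = 0 ∨ p i j = 1) with h'|h'|h' <;> nlinarith
    have hsub : ∑ i ∈ ({a, b} : Finset (Fin k)), p i j ≤ ∑ i, p i j :=
      Finset.sum_le_sum_of_subset_of_nonneg (Finset.subset_univ _) (fun i _ _ => hnn i)
    rw [Finset.sum_pair hab, ha1, hb1] at hsub
    have hP1 : P j = 1 := by rcases hmemP with h|h|h <;> rcases hmemQ with h'|h'|h' <;> linarith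
    have hQ1 : Q j = 1 := by rcases hmemP with h|h|h <;> rcases hmemQ with h'|h'|h' <;> linarith
    exact ⟨by rw [ha1, hb1], by rw [hb1, hP1], by rw [hP1, hQ1]⟩
  · exfalso; rw [← hzero] at hMs; linarith
  · -- negative case
    have ha1 : p a j = -1 := by rcases hmema with h|h|h <;> [exact h; nlinarith; nlinarith]
    have hb1 : p b j = -1 := by rcases hmemb with h|h|h <;> [exact h; nlinarith; nlinarith]
    have hnn : ∀ i, p i j ≤ 0 := by
      intro i
      by_cases h : p i j = 0
      · simp [h]
      · have hc := hconf i j h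
        simp only [Pi.add_apply] at hc
        rcases (by simpa using (hprim i).2 j : p i j = -1 ∨ p i j = 0 ∨ p i j = 1) with h'|h'|h' <;> nlinarith
    have hsub : ∑ i, p i j ≤ ∑ i ∈ ({a, b} : Finset (Fin k)), p i j := by
      have h := Finset.sum_le_sum_of_subset_of_nonneg (f := fun i => -p i j)
        (Finset.subset_univ ({a, b} : Finset (Fin k))) (fun i _ _ => neg_nonneg.2 (hnn i))
      simp only [Finset.sum_neg_distrib] at h
      linarith
    rw [Finset.sum_pair hab, ha1, hb1] at hsub
    have hP1 : P j = -1 := by rcases hmemP with h|h|h <;> rcases hmemQ with h'|h'|h' <;> linarith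
    have hQ1 : Q j = -1 := by rcases hmemP with h|h|h <;> rcases hmemQ with h'|h'|h' <;> linarith
    exact ⟨by rw [ha1, hb1], by rw [hb1, hP1], by rw [hP1, hQ1]⟩
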